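/- Let $\rho \in (-1,1)$, $\rho \ne 0$, and let $(Y_n)_{n\ge 1}$ be i.i.d. with characteristic function $\varphi$ satisfying: there exist $\delta \in (0, |\rho|)$ and $t_0 > 0$ with $|\varphi(t)| \le \delta$ for all $|t| \ge t_0$. Then the characteristic function $\tilde\varphi$ of $Z = \sum_{n=1}^\infty \rho^n Y_n$ satisfies $|\tilde\varphi(t)| \le C |t|^{-\alpha}$ for all $|t| \ge t_0$, where $\alpha = \log(1/\delta)/\log(1/|\rho|) > 1$ and $C$ depends only on $t_0, \rho, \delta$. In particular, $\tilde\varphi$ is absolutely integrable on $\mathbb{R}$. -/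

import Mathlib

open MeasureTheory ProbabilityTheory Finset Complex Filter

lemma aux_mem_summable {Ω : Type*} (f : ℕ → Ω → ℝ) (ω : Ω) :
    (∑' n, (‖f n ω‖₊ : ENNReal)) ≠ ⊤ ↔ Summable (fun n => f n ω) := by
  rw [ENNReal.tsum_coe_ne_top_iff_summable]
  constructor
  · intro h
    have : Summable (fun n => ‖f n ω‖) := by
      rw [← NNReal.summable_coe] at h
      simpa using h
    exact this.of_norm
  · intro h
    have := h.abs
    rw [← NNReal.summable_coe]
    simpa [Real.norm_eq_abs] using this

lemma aux_measurable_tsum {Ω : Type*} {m : MeasurableSpace Ω} (f : ℕ → Ω → ℝ)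
    (hf : ∀ n, Measurable[m] (f n)) : Measurable[m] (fun ω => ∑' n, f n ω) := by
  classical
  set S : Set Ω := {ω | (∑' n, (‖f n ω‖₊ : ENNReal)) ≠ ⊤} with hSdef
  have hSmeas : MeasurableSet[m] S := by
    have h1 : Measurable[m] (fun ω => ∑' n, (‖f n ω‖₊ : ENNReal)) :=
      Measurable.ennreal_tsum (fun n => ((hf n).nnnorm).coe_nnreal_ennreal)
    exact (h1 (measurableSet_singleton ⊤)).compl
  have hSsum : ∀ ω, ω ∈ S ↔ Summable (fun n => f n ω) := fun ω => aux_mem_summable f ω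
  have key : Tendsto (fun (N : ℕ) => S.piecewise (fun ω => ∑ i ∈ Finset.range N, f i ω)
      (0 : Ω → ℝ)) atTop (nhds (fun ω => ∑' n, f n ω)) := by
    rw [tendsto_pi_nhds]
    intro ω
    by_cases hω : ω ∈ S
    · simp only [Set.piecewise_eq_of_mem _ _ _ hω]
      exact ((hSsum ω).1 hω).hasSum.tendsto_sum_nat
    · simp only [Set.piecewise_eq_of_notMem _ _ _ hω, Pi.zero_apply]
      rw [tsum_eq_zero_of_not_summable (fun hs => hω ((hSsum ω).2 hs))]
      exact tendsto_const_nhds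
  exact measurable_of_tendsto_metrizable
    (fun N => Measurable.piecewise hSmeas (Finset.measurable_sum _ (fun i _ => hf i))
      measurable_const) key

lemma aux_indep_integral_mul {Ω : Type*} {m : MeasurableSpace Ω} {μ : Measure Ω}
    [IsProbabilityMeasure μ] {f g : Ω → ℂ} (h : IndepFun f g μ)
    (hf : AEStronglyMeasurable f μ) (hg : AEStronglyMeasurable g μ)
    (hbf : ∀ ω, ‖f ω‖ ≤ 1) (hbg : ∀ ω, ‖g ω‖ ≤ 1) :
    ∫ ω, f ω * g ω ∂μ = (∫ ω, f ω ∂μ) * ∫ ω, g ω ∂μ := by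
  have hfi : Integrable f μ :=
    Integrable.mono' (integrable_const 1) hf (Eventually.of_forall hbf)
  have hgi : Integrable g μ :=
    Integrable.mono' (integrable_const 1) hg (Eventually.of_forall hbg)
  have hfgi : Integrable (fun ω => f ω * g ω) μ := by
    refine Integrable.mono' (integrable_const 1) (hf.mul hg) (Eventually.of_forall fun ω => ?_)
    calc ‖f ω * g ω‖ = ‖f ω‖ * ‖g ω‖ := norm_mul _ _
    _ ≤ 1 * 1 := mul_le_mul (hbf ω) (hbg ω) (norm_nonneg _) zero_le_one
    _ = 1 := one_mul 1
  have hu1 : AEStronglyMeasurable (fun ω => (f ω).re) μ :=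
    Complex.continuous_re.comp_aestronglyMeasurable hf
  have hv1 : AEStronglyMeasurable (fun ω => (f ω).im) μ :=
    Complex.continuous_im.comp_aestronglyMeasurable hf
  have hu2 : AEStronglyMeasurable (fun ω => (g ω).re) μ :=
    Complex.continuous_re.comp_aestronglyMeasurable hg
  have hv2 : AEStronglyMeasurable (fun ω => (g ω).im) μ :=
    Complex.continuous_im.comp_aestronglyMeasurable hg
  have hbnd : ∀ (F : Ω → ℂ), (∀ ω, ‖F ω‖ ≤ 1) → ∀ p : Ω → ℝ,
      (∀ ω, |p ω| ≤ ‖F ω‖) → AEStronglyMeasurable p μ → Integrable p μ := by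
    intro F hF p hp hpm
    refine Integrable.mono' (integrable_const 1) hpm (Eventually.of_forall fun ω => ?_)
    rw [Real.norm_eq_abs]
    exact (hp ω).trans (hF ω)
  have hiu1 : Integrable (fun ω => (f ω).re) μ :=
    hbnd f hbf _ (fun ω => Complex.abs_re_le_norm _) hu1
  have hiv1 : Integrable (fun ω => (f ω).im) μ :=
    hbnd f hbf _ (fun ω => Complex.abs_im_le_norm _) hv1
  have hiu2 : Integrable (fun ω => (g ω).re) μ :=
    hbnd g hbg _ (fun ω => Complex.abs_re_le_norm _) hu2
  have hiv2 : Integrable (fun ω => (g ω).im) μ :=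
    hbnd g hbg _ (fun ω => Complex.abs_im_le_norm _) hv2
  have hIuu : Integrable (fun ω => (f ω).re * (g ω).re) μ := by
    refine Integrable.mono' (integrable_const 1) (hu1.mul hu2) (Eventually.of_forall fun ω => ?_)
    rw [Real.norm_eq_abs, abs_mul]
    exact mul_le_mul ((Complex.abs_re_le_norm _).trans (hbf ω))
      ((Complex.abs_re_le_norm _).trans (hbg ω)) (abs_nonneg _) zero_le_one |>.trans (by norm_num)
  have hIvv : Integrable (fun ω => (f ω).im * (g ω).im) μ := by
    refine Integrable.mono' (integrable_const 1) (hv1.mul hv2) (Eventually.of_forall fun ω => ?_)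
    rw [Real.norm_eq_abs, abs_mul]
    exact mul_le_mul ((Complex.abs_im_le_norm _).trans (hbf ω))
      ((Complex.abs_im_le_norm _).trans (hbg ω)) (abs_nonneg _) zero_le_one |>.trans (by norm_num)
  have hIuv : Integrable (fun ω => (f ω).re * (g ω).im) μ := by
    refine Integrable.mono' (integrable_const 1) (hu1.mul hv2) (Eventually.of_forall fun ω => ?_)
    rw [Real.norm_eq_abs, abs_mul]
    exact mul_le_mul ((Complex.abs_re_le_norm _).trans (hbf ω))
      ((Complex.abs_im_le_norm _).trans (hbg ω)) (abs_nonneg _) zero_le_one |>.trans (by norm_num)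
  have hIvu : Integrable (fun ω => (f ω).im * (g ω).re) μ := by
    refine Integrable.mono' (integrable_const 1) (hv1.mul hu2) (Eventually.of_forall fun ω => ?_)
    rw [Real.norm_eq_abs, abs_mul]
    exact mul_le_mul ((Complex.abs_im_le_norm _).trans (hbf ω))
      ((Complex.abs_re_le_norm _).trans (hbg ω)) (abs_nonneg _) zero_le_one |>.trans (by norm_num)
  have h_uu : ∫ ω, (f ω).re * (g ω).re ∂μ = (∫ ω, (f ω).re ∂μ) * ∫ ω, (g ω).re ∂μ :=
    IndepFun.integral_fun_mul_eq_mul_integral (h.comp Complex.measurable_re Complex.measurable_re) hu1 hu2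
  have h_vv : ∫ ω, (f ω).im * (g ω).im ∂μ = (∫ ω, (f ω).im ∂μ) * ∫ ω, (g ω).im ∂μ :=
    IndepFun.integral_fun_mul_eq_mul_integral (h.comp Complex.measurable_im Complex.measurable_im) hv1 hv2
  have h_uv : ∫ ω, (f ω).re * (g ω).im ∂μ = (∫ ω, (f ω).re ∂μ) * ∫ ω, (g ω).im ∂μ :=
    IndepFun.integral_fun_mul_eq_mul_integral (h.comp Complex.measurable_re Complex.measurable_im) hu1 hv2
  have h_vu : ∫ ω, (f ω).im * (g ω).re ∂μ = (∫ ω, (f ω).im ∂μ) * ∫ ω, (g ω).re ∂μ :=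
    IndepFun.integral_fun_mul_eq_mul_integral (h.comp Complex.measurable_im Complex.measurable_re) hv1 hu2
  have hre : (∫ ω, f ω * g ω ∂μ).re
      = (∫ ω, (f ω).re ∂μ) * (∫ ω, (g ω).re ∂μ) - (∫ ω, (f ω).im ∂μ) * ∫ ω, (g ω).im ∂μ := by
    have : (∫ ω, f ω * g ω ∂μ).re = ∫ ω, (f ω * g ω).re ∂μ := by
      rw [← RCLike.re_to_complex]
      rw [← integral_re hfgi]
      simp [RCLike.re_to_complex]
    rw [this, ← h_uu, ← h_vv, ← integral_sub hIuu hIvv]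
    exact integral_congr_ae (Filter.Eventually.of_forall fun ω => Complex.mul_re _ _)
  have him : (∫ ω, f ω * g ω ∂μ).im
      = (∫ ω, (f ω).re ∂μ) * (∫ ω, (g ω).im ∂μ) + (∫ ω, (f ω).im ∂μ) * ∫ ω, (g ω).re ∂μ := by
    have : (∫ ω, f ω * g ω ∂μ).im = ∫ ω, (f ω * g ω).im ∂μ := by
      rw [← RCLike.im_to_complex]
      rw [← integral_im hfgi]
      simp [RCLike.im_to_complex]
    rw [this, ← h_uv, ← h_vu, ← integral_add hIuv hIvu]
    exact integral_congr_ae (Filter.Eventually.of_forall fun ω => Complex.mul_im _ _)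
  have hfre : (∫ ω, f ω ∂μ).re = ∫ ω, (f ω).re ∂μ := by
    rw [← RCLike.re_to_complex, ← integral_re hfi]; simp [RCLike.re_to_complex]
  have hfim : (∫ ω, f ω ∂μ).im = ∫ ω, (f ω).im ∂μ := by
    rw [← RCLike.im_to_complex, ← integral_im hfi]; simp [RCLike.im_to_complex]
  have hgre : (∫ ω, g ω ∂μ).re = ∫ ω, (g ω).re ∂μ := by
    rw [← RCLike.re_to_complex, ← integral_re hgi]; simp [RCLike.re_to_complex]
  have hgim : (∫ ω, g ω ∂μ).im = ∫ ω, (g ω).im ∂μ := by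
    rw [← RCLike.im_to_complex, ← integral_im hgi]; simp [RCLike.im_to_complex]
  apply Complex.ext
  · rw [hre, Complex.mul_re, hfre, hfim, hgre, hgim]
  · rw [him, Complex.mul_im, hfre, hfim, hgre, hgim]

theorem stmt_7 {Ω : Type*} [MeasureSpace Ω] [IsProbabilityMeasure (ℙ : Measure Ω)]
    (ρ : ℝ) (hρ1 : ρ ∈ Set.Ioo (-1 : ℝ) 1) (hρ0 : ρ ≠ 0)
    (Y : ℕ → Ω → ℝ) (hmeas : ∀ n, Measurable (Y n))
    (hindep : iIndepFun Y ℙ)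
    (hident : ∀ n, IdentDistrib (Y n) (Y 1) ℙ ℙ)
    (a : ℝ) (ha : 0 < a) (hmom : Integrable (fun ω => |Y 1 ω| ^ a) ℙ)
    (φ : ℝ → ℂ) (hφ : ∀ t, φ t = ∫ ω, Complex.exp (Complex.I * t * Y 1 ω) ∂ℙ)
    (δ t0 : ℝ) (hδ : δ ∈ Set.Ioo (0 : ℝ) |ρ|) (ht0 : 0 < t0)
    (hφδ : ∀ t : ℝ, t0 ≤ |t| → ‖φ t‖ ≤ δ)
    (Z : Ω → ℝ) (hZ : ∀ ω, Z ω = ∑' n : ℕ, ρ ^ (n + 1) * Y (n + 1) ω)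
    (φt : ℝ → ℂ) (hφt : ∀ t, φt t = ∫ ω, Complex.exp (Complex.I * t * Z ω) ∂ℙ)
    (α : ℝ) (hα : α = Real.log (1 / δ) / Real.log (1 / |ρ|)) :
    1 < α ∧
    (∃ C > 0, ∀ t : ℝ, t0 ≤ |t| → ‖φt t‖ ≤ C * |t| ^ (-α)) ∧
    Integrable φt := by
  classical
  obtain ⟨hδ0, hδb⟩ := hδ
  have hb0 : (0:ℝ) < |ρ| := abs_pos.mpr hρ0
  have hb1 : |ρ| < 1 := abs_lt.mpr ⟨hρ1.1, hρ1.2⟩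
  have hδ1 : δ < 1 := hδb.trans hb1
  have h1b : (1:ℝ) < 1 / |ρ| := (one_lt_div hb0).mpr hb1
  have hlogb : 0 < Real.log (1 / |ρ|) := Real.log_pos h1b
  have hα1 : 1 < α := by
    rw [hα]
    exact (one_lt_div hlogb).mpr
      (Real.log_lt_log (by positivity) (one_div_lt_one_div_of_lt hδ0 hδb))
  -- notation
  set b : ℝ := |ρ| with hbdef
  set f : ℕ → Ω → ℝ := fun n ω => ρ ^ (n + 1) * Y (n + 1) ω with hfdef
  set T : ℕ → Ω → ℝ := fun k ω => ∑' n, f (n + k) ω with hTdef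
  have hfmeas : ∀ n, Measurable (f n) := fun n => (hmeas (n+1)).const_mul _
  have hTmeas : ∀ k, Measurable (T k) :=
    fun k => aux_measurable_tsum (fun n => f (n + k)) (fun n => hfmeas (n+k))
  have hZT : ∀ ω, Z ω = T 0 ω := fun ω => hZ ω
  have hZmeas : Measurable Z := by
    have : Z = T 0 := funext hZT
    rw [this]; exact hTmeas 0
  -- a.s. summability
  have hMnn : 0 ≤ ∫ ω, |Y 1 ω| ^ a ∂ℙ :=
    integral_nonneg (fun ω => Real.rpow_nonneg (abs_nonneg _) _)
  set M : ℝ := ∫ ω, |Y 1 ω| ^ a ∂ℙ with hMdef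
  set r : ℝ := Real.sqrt (1 / b) with hrdef
  have hr1 : 1 < r := by
    have h := Real.sqrt_lt_sqrt zero_le_one h1b
    rwa [Real.sqrt_one] at h
  have hr0 : 0 < r := zero_lt_one.trans hr1
  have hbr : b * r < 1 := by
    have h1 : (b*r)^2 = b := by
      rw [mul_pow, hrdef, Real.sq_sqrt (by positivity), sq]
      field_simp
    nlinarith [mul_nonneg hb0.le hr0.le]
  have habs_meas : Measurable fun x : ℝ => |x| ^ a :=
    ((Real.continuous_rpow_const ha.le).comp _root_.continuous_abs).measurable
  set s : ℕ → Set Ω := fun n => {ω | r ^ n ≤ |Y n ω|} with hsdef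
  have hkey : ∀ n, ℙ (s n) ≤ ENNReal.ofReal (M * ((r ^ a)⁻¹) ^ n) := by
    intro n
    have hid : IdentDistrib (fun ω => |Y n ω| ^ a) (fun ω => |Y 1 ω| ^ a) ℙ ℙ :=
      (hident n).comp habs_meas
    have hint : Integrable (fun ω => |Y n ω| ^ a) ℙ := hid.integrable_iff.mpr hmom
    have hMn : ∫ ω, |Y n ω| ^ a ∂ℙ = M := hid.integral_eq
    have hε0 : 0 < (r^a)^n := pow_pos (Real.rpow_pos_of_pos hr0 a) n
    have hsub : s n ⊆ {ω | (r^a)^n ≤ |Y n ω| ^ a} := by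
      intro ω hω
      have h1 : ((r:ℝ) ^ n) ^ a ≤ |Y n ω| ^ a :=
        Real.rpow_le_rpow (pow_pos hr0 n).le hω ha.le
      have h2 : ((r:ℝ) ^ n) ^ a = (r ^ a) ^ n := by
        rw [← Real.rpow_natCast r n, ← Real.rpow_natCast (r^a) n,
          ← Real.rpow_mul hr0.le, ← Real.rpow_mul hr0.le]
        ring_nf
      rw [Set.mem_setOf_eq, ← h2]
      exact h1
    have hmark := mul_meas_ge_le_integral_of_nonneg (μ := ℙ)
      (Filter.Eventually.of_forall fun ω => Real.rpow_nonneg (abs_nonneg _) a) hint ((r^a)^n)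
    rw [hMn] at hmark
    have hPle : (ℙ (s n)).toReal ≤ M * ((r^a)⁻¹)^n := by
      have h3 : (ℙ (s n)).toReal ≤ (ℙ {ω | (r^a)^n ≤ |Y n ω| ^ a}).toReal :=
        ENNReal.toReal_mono (measure_ne_top _ _) (measure_mono hsub)
      have h4 : (ℙ {ω | (r^a)^n ≤ |Y n ω| ^ a}).toReal ≤ M / (r^a)^n := by
        rw [le_div_iff₀ hε0]
        rw [measureReal_def] at hmark
        linarith [hmark]
      rw [div_eq_mul_inv, ← inv_pow] at h4
      linarith
    calc ℙ (s n) = ENNReal.ofReal ((ℙ (s n)).toReal) :=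
        (ENNReal.ofReal_toReal (measure_ne_top _ _)).symm
    _ ≤ ENNReal.ofReal (M * ((r^a)⁻¹)^n) := ENNReal.ofReal_le_ofReal hPle
  have hc1 : (r^a)⁻¹ < 1 := by
    rw [inv_lt_one_iff₀]
    right
    exact Real.one_lt_rpow_iff_of_pos hr0 |>.mpr (Or.inl ⟨hr1, ha⟩)
  have hc0 : (0:ℝ) ≤ (r^a)⁻¹ := by positivity
  have hsumtop : (∑' n, ℙ (s n)) ≠ ⊤ := by
    have hgs : Summable (fun n : ℕ => M * ((r^a)⁻¹)^n) :=
      (summable_geometric_of_lt_one hc0 hc1).mul_left M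
    have hle := ENNReal.tsum_le_tsum hkey
    rw [← ENNReal.ofReal_tsum_of_nonneg (fun n => mul_nonneg hMnn (pow_nonneg hc0 n)) hgs] at hle
    exact ne_top_of_le_ne_top ENNReal.ofReal_ne_top hle
  have hae : ∀ᵐ ω ∂ℙ, Summable (fun n => f n ω) := by
    filter_upwards [ae_eventually_notMem hsumtop] with ω hω
    rw [Filter.eventually_atTop] at hω
    obtain ⟨N₀, hN₀⟩ := hω
    refine Summable.of_norm_bounded_eventually (g := fun n => (b*r)^n) ?_ ?_
    · exact summable_geometric_of_lt_one (by positivity) hbr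
    · rw [Nat.cofinite_eq_atTop, Filter.eventually_atTop]
      refine ⟨N₀, fun n hn => ?_⟩
      have h1 : ¬ r ^ (n+1) ≤ |Y (n+1) ω| := hN₀ (n+1) (le_trans hn (Nat.le_succ n))
      have h2 : |Y (n+1) ω| ≤ r ^ (n+1) := (not_le.mp h1).le
      have h3 : ‖f n ω‖ = b^(n+1) * |Y (n+1) ω| := by
        rw [hfdef]
        simp [Real.norm_eq_abs, abs_mul, _root_.abs_pow, hbdef]
      rw [h3]
      calc b^(n+1) * |Y (n+1) ω| ≤ b^(n+1) * r^(n+1) := by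
            exact mul_le_mul_of_nonneg_left h2 (by positivity)
      _ = (b*r)^(n+1) := (mul_pow b r (n+1)).symm
      _ ≤ (b*r)^n :=
        pow_le_pow_of_le_one (by positivity) hbr.le (Nat.le_succ n)
  have hdecomp : ∀ᵐ ω ∂ℙ, ∀ k, T k ω = f k ω + T (k+1) ω := by
    filter_upwards [hae] with ω hω
    intro k
    have hk : Summable (fun n => f (n + k) ω) := (summable_nat_add_iff k).mpr hω
    have h1 : T k ω = f (0 + k) ω + ∑' n, f ((n + 1) + k) ω := hk.tsum_eq_zero_add
    rw [h1]
    congr 1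
    · simp
    · exact tsum_congr fun n => by
        have : n + 1 + k = n + (k + 1) := by omega
        rw [this]
  -- exp facts
  have hnorm1 : ∀ (u x : ℝ), ‖Complex.exp (Complex.I * u * x)‖ = 1 := by
    intro u x
    have h : (Complex.I * u * x) = ((u*x : ℝ) : ℂ) * Complex.I := by push_cast; ring
    rw [h, Complex.norm_exp_ofReal_mul_I]
  have hexpmeas : ∀ (u : ℝ), Measurable (fun x : ℝ => Complex.exp (Complex.I * u * x)) :=
    fun u => Complex.measurable_exp.comp (Complex.measurable_ofReal.const_mul _)
  -- one-step factorization
  have hstep : ∀ (k : ℕ) (t : ℝ),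
      (∫ ω, Complex.exp (Complex.I * t * T k ω) ∂ℙ)
        = φ (ρ^(k+1) * t) * ∫ ω, Complex.exp (Complex.I * t * T (k+1) ω) ∂ℙ := by
    intro k t
    have hsle : ∀ n, MeasurableSpace.comap (Y n) (inferInstance : MeasurableSpace ℝ)
        ≤ (inferInstance : MeasurableSpace Ω) := fun n => (hmeas n).comap_le
    have hIndepSig := indep_biSup_compl hsle hindep.iIndep {k+1}
    have hg2m' : Measurable[⨆ n ∈ ({k+1} : Set ℕ)ᶜ,
        MeasurableSpace.comap (Y n) inferInstance] (T (k+1)) := by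
      apply aux_measurable_tsum (fun n => f (n + (k+1)))
      intro n
      have h1 : Measurable[MeasurableSpace.comap (Y (n + (k+1) + 1)) inferInstance]
          (Y (n + (k+1) + 1)) := Measurable.of_comap_le le_rfl
      have h2 : MeasurableSpace.comap (Y (n + (k+1) + 1)) inferInstance
          ≤ ⨆ m ∈ ({k+1} : Set ℕ)ᶜ, MeasurableSpace.comap (Y m) inferInstance := by
        exact le_biSup (fun m => MeasurableSpace.comap (Y m) inferInstance)
          (show (n + (k+1) + 1) ∈ ({k+1} : Set ℕ)ᶜ by
            simp only [Set.mem_compl_iff, Set.mem_singleton_iff]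
            omega)
      exact (h1.le h2).const_mul _
    have hg1m' : Measurable[MeasurableSpace.comap (Y (k+1)) inferInstance] (f k) :=
      (Measurable.of_comap_le le_rfl).const_mul _
    have hA : Indep (MeasurableSpace.comap (Y (k+1)) inferInstance)
        (⨆ n ∈ ({k+1} : Set ℕ)ᶜ, MeasurableSpace.comap (Y n) inferInstance) ℙ := by
      refine indep_of_indep_of_le_left hIndepSig ?_
      exact le_biSup (fun m => MeasurableSpace.comap (Y m) inferInstance)
        (Set.mem_singleton (k+1))
    have hIF : IndepFun (fun ω => Complex.exp (Complex.I * t * f k ω))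
        (fun ω => Complex.exp (Complex.I * t * T (k+1) ω)) ℙ := by
      rw [IndepFun_iff_Indep]
      refine indep_of_indep_of_le_left (indep_of_indep_of_le_right hA ?_) ?_
      · exact Measurable.comap_le ((hexpmeas t).comp hg2m')
      · exact Measurable.comap_le ((hexpmeas t).comp hg1m')
    have e1 : ∫ ω, Complex.exp (Complex.I * t * T k ω) ∂ℙ
        = ∫ ω, Complex.exp (Complex.I * t * f k ω)
            * Complex.exp (Complex.I * t * T (k+1) ω) ∂ℙ := by
      refine integral_congr_ae ?_
      filter_upwards [hdecomp] with ω hω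
      rw [hω k]
      push_cast
      rw [mul_add, Complex.exp_add]
    rw [e1, aux_indep_integral_mul hIF
      (((hexpmeas t).comp (hfmeas k)).aestronglyMeasurable)
      (((hexpmeas t).comp (hTmeas (k+1))).aestronglyMeasurable)
      (fun ω => le_of_eq (hnorm1 _ _)) (fun ω => le_of_eq (hnorm1 _ _))]
    congr 1
    have e2 : ∀ ω, Complex.exp (Complex.I * t * f k ω)
        = Complex.exp (Complex.I * ((ρ^(k+1)*t : ℝ) : ℂ) * Y (k+1) ω) := by
      intro ω
      congr 1
      rw [hfdef]
      push_cast
      ring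
    rw [hφ]
    calc ∫ ω, Complex.exp (Complex.I * t * f k ω) ∂ℙ
        = ∫ ω, Complex.exp (Complex.I * ((ρ^(k+1)*t : ℝ) : ℂ) * Y (k+1) ω) ∂ℙ :=
          integral_congr_ae (Eventually.of_forall fun ω => e2 ω)
      _ = ∫ ω, Complex.exp (Complex.I * ((ρ^(k+1)*t : ℝ) : ℂ) * Y 1 ω) ∂ℙ := by
          have := ((hident (k+1)).comp (hexpmeas (ρ^(k+1)*t))).integral_eq
          simpa [Function.comp] using this
  have hiter : ∀ (N : ℕ) (t : ℝ), (∫ ω, Complex.exp (Complex.I * t * T 0 ω) ∂ℙ)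
      = (∏ k ∈ Finset.range N, φ (ρ^(k+1)*t))
        * ∫ ω, Complex.exp (Complex.I * t * T N ω) ∂ℙ := by
    intro N t
    induction N with
    | zero => simp
    | succ n ih => rw [ih, hstep n t, Finset.prod_range_succ]; ring
  have hφtT : ∀ t, φt t = ∫ ω, Complex.exp (Complex.I * t * T 0 ω) ∂ℙ := by
    intro t
    rw [hφt]
    exact integral_congr_ae (Eventually.of_forall fun ω => by simp only [hZT ω])
  have hIle1 : ∀ (t : ℝ) (k : ℕ), ‖∫ ω, Complex.exp (Complex.I * t * T k ω) ∂ℙ‖ ≤ 1 := by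
    intro t k
    have := norm_integral_le_of_norm_le_const (μ := ℙ) (C := 1)
      (f := fun ω => Complex.exp (Complex.I * t * T k ω))
      (Eventually.of_forall fun ω => le_of_eq (hnorm1 t _))
    simpa using this
  have hlogbne : Real.log b ≠ 0 := by
    have : Real.log b < 0 := Real.log_neg hb0 hb1
    linarith
  -- the main bound
  have hbound : ∀ t : ℝ, t0 ≤ |t| → ‖φt t‖ ≤ (t0 ^ α / δ) * |t| ^ (-α) := by
    intro t ht
    have htpos : (0:ℝ) < |t| := lt_of_lt_of_le ht0 ht
    set N : ℕ := ⌊Real.logb (1/b) (|t|/t0)⌋₊ with hNdef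
    have hL0 : 0 ≤ Real.logb (1/b) (|t|/t0) := by
      apply Real.logb_nonneg h1b
      rw [le_div_iff₀ ht0]
      simpa using ht
    have hNle : (N:ℝ) ≤ Real.logb (1/b) (|t|/t0) := Nat.floor_le hL0
    have hNge : Real.logb (1/b) (|t|/t0) - 1 ≤ (N:ℝ) := (Nat.sub_one_lt_floor _).le
    have hfac : ∀ k ∈ Finset.range N, ‖φ (ρ^(k+1) * t)‖ ≤ δ := by
      intro k hk
      apply hφδ
      rw [abs_mul, _root_.abs_pow, ← hbdef]
      have hk1 : ((k:ℝ)+1) ≤ Real.logb (1/b) (|t|/t0) := by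
        have hkN : (k+1 : ℕ) ≤ N := Finset.mem_range.mp hk
        calc ((k:ℝ)+1) ≤ (N:ℝ) := by exact_mod_cast hkN
        _ ≤ _ := hNle
      have h2 : (1/b) ^ ((k:ℝ)+1) ≤ (1/b) ^ Real.logb (1/b) (|t|/t0) :=
        Real.rpow_le_rpow_of_exponent_le h1b.le hk1
      rw [Real.rpow_logb (by positivity) (ne_of_gt h1b) (by positivity)] at h2
      have h3 : (1/b) ^ ((k:ℝ)+1) = (b ^ (k+1 : ℕ))⁻¹ := by
        rw [show ((k:ℝ)+1) = ((k+1 : ℕ) : ℝ) by push_cast; ring, Real.rpow_natCast,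
          one_div, inv_pow]
      rw [h3] at h2
      have h4 : (b^(k+1:ℕ))⁻¹ * t0 ≤ |t| := (le_div_iff₀ ht0).mp h2
      have h5 := (inv_mul_le_iff₀ (pow_pos hb0 (k+1))).mp h4
      exact h5
    have hchain : ‖φt t‖ ≤ δ ^ N := by
      rw [hφtT t, hiter N t, norm_mul]
      calc ‖∏ k ∈ Finset.range N, φ (ρ^(k+1)*t)‖
            * ‖∫ ω, Complex.exp (Complex.I * t * T N ω) ∂ℙ‖
          ≤ ‖∏ k ∈ Finset.range N, φ (ρ^(k+1)*t)‖ * 1 :=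
            mul_le_mul_of_nonneg_left (hIle1 t N) (norm_nonneg _)
        _ = ‖∏ k ∈ Finset.range N, φ (ρ^(k+1)*t)‖ := mul_one _
        _ ≤ ∏ k ∈ Finset.range N, δ := by
            rw [norm_prod]
            exact Finset.prod_le_prod (fun _ _ => norm_nonneg _) hfac
        _ = δ ^ N := by rw [Finset.prod_const, Finset.card_range]
    have hnum : (δ:ℝ) ^ N ≤ (t0 ^ α / δ) * |t| ^ (-α) := by
      have h1 : (δ:ℝ)^N = δ ^ ((N:ℝ)) := (Real.rpow_natCast δ N).symm
      have h2 : δ ^ ((N:ℝ)) ≤ δ ^ (Real.logb (1/b) (|t|/t0) - 1) :=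
        Real.rpow_le_rpow_of_exponent_ge hδ0 hδ1.le hNge
      have h3 : δ ^ (Real.logb (1/b) (|t|/t0) - 1)
          = δ ^ (Real.logb (1/b) (|t|/t0)) / δ := by
        rw [Real.rpow_sub hδ0, Real.rpow_one]
      have h4 : δ ^ (Real.logb (1/b) (|t|/t0)) = (|t|/t0) ^ (-α) := by
        rw [Real.rpow_def_of_pos hδ0, Real.rpow_def_of_pos (by positivity)]
        congr 1
        rw [Real.logb, hα, one_div δ, one_div b, Real.log_inv, Real.log_inv]
        field_simp [hlogbne]
      have h5 : (|t|/t0) ^ (-α : ℝ) = |t| ^ (-α) * t0 ^ α := by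
        rw [Real.div_rpow htpos.le ht0.le, Real.rpow_neg ht0.le, div_eq_mul_inv, inv_inv]
      rw [h1]
      calc δ ^ ((N:ℝ)) ≤ δ ^ (Real.logb (1/b) (|t|/t0) - 1) := h2
      _ = (|t|/t0) ^ (-α) / δ := by rw [h3, h4]
      _ = (t0 ^ α / δ) * |t| ^ (-α) := by rw [h5]; ring
    exact hchain.trans hnum
  -- continuity of φt
  have hφtcont : Continuous φt := by
    have hfun : φt = fun t : ℝ => ∫ ω, Complex.exp (Complex.I * (t:ℂ) * ((Z ω : ℝ) : ℂ)) ∂ℙ :=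
      funext hφt
    rw [hfun]
    apply continuous_of_dominated
      (bound := fun _ => (1:ℝ))
    · intro t
      exact ((hexpmeas t).comp hZmeas).aestronglyMeasurable
    · intro t
      exact Eventually.of_forall fun ω => le_of_eq (hnorm1 t _)
    · exact integrable_const 1
    · refine Eventually.of_forall fun ω => ?_
      exact Complex.continuous_exp.comp
        ((continuous_const.mul Complex.continuous_ofReal).mul continuous_const)
  have hCpos : (0:ℝ) < t0 ^ α / δ := by positivity
  refine ⟨hα1, ⟨t0 ^ α / δ, hCpos, hbound⟩, ?_⟩
  -- integrability
  have hint1 : IntegrableOn φt (Set.Icc (-t0) t0) := hφtcont.integrableOn_Icc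
  have hrint : IntegrableOn (fun t : ℝ => (t0 ^ α / δ) * t ^ (-α)) (Set.Ioi t0) :=
    (integrableOn_Ioi_rpow_of_lt (by linarith) ht0).const_mul _
  have hint2 : IntegrableOn φt (Set.Ioi t0) := by
    refine Integrable.mono' hrint hφtcont.aestronglyMeasurable.restrict ?_
    filter_upwards [ae_restrict_mem measurableSet_Ioi] with t htmem
    have ht' : t0 ≤ |t| := by
      rw [abs_of_pos (ht0.trans htmem)]
      exact (le_of_lt htmem)
    have := hbound t ht'
    rwa [abs_of_pos (ht0.trans htmem)] at this
  have hint3 : IntegrableOn φt (Set.Iio (-t0)) := by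
    have hneg : IntegrableOn (fun t => φt (-t)) (Set.Ioi t0) := by
      refine Integrable.mono' hrint
        (hφtcont.comp continuous_neg).aestronglyMeasurable.restrict ?_
      filter_upwards [ae_restrict_mem measurableSet_Ioi] with t htmem
      have ht' : t0 ≤ |(-t)| := by
        rw [abs_neg, abs_of_pos (ht0.trans htmem)]
        exact (le_of_lt htmem)
      have := hbound (-t) ht'
      rwa [abs_neg, abs_of_pos (ht0.trans htmem)] at this
    have h1 : Integrable ((Set.Ioi t0).indicator (fun t => φt (-t))) volume :=
      hneg.integrable_indicator measurableSet_Ioi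
    have h2 := h1.comp_neg
    have h3 : (fun t => (Set.Ioi t0).indicator (fun u => φt (-u)) (-t))
        = (Set.Iio (-t0)).indicator φt := by
      funext t
      by_cases h : t < -t0
      · rw [Set.indicator_of_mem (by simpa [Set.mem_Ioi] using by linarith : -t ∈ Set.Ioi t0),
          Set.indicator_of_mem (Set.mem_Iio.mpr h), neg_neg]
      · rw [Set.indicator_of_notMem (by simp [Set.mem_Ioi]; linarith [not_lt.mp h]),
          Set.indicator_of_notMem (by simpa [Set.mem_Iio] using h)]
    rw [h3] at h2
    exact (integrable_indicator_iff measurableSet_Iio).mp h2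
  have hunion : (Set.univ : Set ℝ) = Set.Iio (-t0) ∪ (Set.Icc (-t0) t0 ∪ Set.Ioi t0) := by
    ext t
    simp only [Set.mem_univ, Set.mem_union, Set.mem_Iio, Set.mem_Icc, Set.mem_Ioi, true_iff]
    rcases lt_or_ge t (-t0) with h | h
    · exact Or.inl h
    · rcases le_or_gt t t0 with h' | h'
      · exact Or.inr (Or.inl ⟨h, h'⟩)
      · exact Or.inr (Or.inr h')
  rw [← integrableOn_univ, hunion]
  exact hint3.union (hint1.union hint2)
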